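/- Corollary (weights achieving 1-strong convexity of composite dilated DGFs). Under the chain-of-scaled-extensions setup, suppose the coefficients are chosen recursively as α_n := 2 and α_k := 2 + 2·‖ Σ_{p=k}^{n−1} α_{p+1}·‖a_p‖₀·a_{p,k} ‖_∞ for k = n−1,…,1. Then for all x, x′ ∈ (relint X_1) ◁^{h_1} ⋯ ◁^{h_{n−1}} (relint X_n), the composite DGF d satisfies ⟨∇d(x) − ∇d(x′), x − x′⟩ ≥ ‖x − x′‖₂², i.e., d is 1-strongly convex with respect to the Euclidean norm. -/

import Mathlib

open Finset
open scoped RealInnerProductSpace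

lemma mem_intrinsicInterior_iff_ball {E : Type*} [NormedAddCommGroup E] [NormedSpace ℝ E]
    {s : Set E} {w : E} :
    w ∈ intrinsicInterior ℝ s ↔ ∃ _ : w ∈ affineSpan ℝ s, ∃ ε > (0:ℝ),
      ∀ p ∈ affineSpan ℝ s, dist p w < ε → p ∈ s := by
  rw [mem_intrinsicInterior]
  constructor
  · rintro ⟨yy, hy, rfl⟩
    refine ⟨yy.2, ?_⟩
    rw [mem_interior_iff_mem_nhds, Metric.mem_nhds_iff] at hy
    obtain ⟨ε, hε, hball⟩ := hy
    refine ⟨ε, hε, fun p hp hd => ?_⟩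
    exact hball (show (⟨p, hp⟩ : affineSpan ℝ s) ∈ Metric.ball yy ε by
      simpa [Metric.mem_ball, Subtype.dist_eq] using hd)
  · rintro ⟨hw, ε, hε, hsub⟩
    refine ⟨⟨w, hw⟩, ?_, rfl⟩
    rw [mem_interior_iff_mem_nhds, Metric.mem_nhds_iff]
    refine ⟨ε, hε, fun p hp => hsub p p.2 ?_⟩
    simpa [Metric.mem_ball, Subtype.dist_eq] using hp

lemma combo_mem_intrinsicInterior' {E : Type*} [NormedAddCommGroup E] [NormedSpace ℝ E]
    {s : Set E} (hs : Convex ℝ s) {w w' : E} (hw : w ∈ intrinsicInterior ℝ s)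
    (hw' : w' ∈ intrinsicInterior ℝ s) {τ : ℝ} (h0 : 0 ≤ τ) (h1 : τ ≤ 1) :
    w + τ • (w' - w) ∈ intrinsicInterior ℝ s := by
  rw [mem_intrinsicInterior_iff_ball] at hw hw' ⊢
  obtain ⟨hwA, ε, hε, hb⟩ := hw
  obtain ⟨hwA', ε', hε', hb'⟩ := hw'
  set z := w + τ • (w' - w) with hz
  have hzA : z ∈ affineSpan ℝ s := by
    have := AffineSubspace.smul_vsub_vadd_mem (affineSpan ℝ s) τ hwA' hwA hwA
    simpa [vsub_eq_sub, vadd_eq_add, hz, add_comm] using this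
  refine ⟨hzA, min ε ε', lt_min hε hε', fun p hp hd => ?_⟩
  have hmem1 : w + (p - z) ∈ s := by
    refine hb _ ?_ ?_
    · have := AffineSubspace.smul_vsub_vadd_mem (affineSpan ℝ s) (1:ℝ) hp hzA hwA
      simpa [vsub_eq_sub, vadd_eq_add, add_comm] using this
    · have : dist (w + (p - z)) w = dist p z := by
        simp [dist_eq_norm]
      rw [this]
      exact lt_of_lt_of_le hd (min_le_left _ _)
  have hmem2 : w' + (p - z) ∈ s := by
    refine hb' _ ?_ ?_
    · have := AffineSubspace.smul_vsub_vadd_mem (affineSpan ℝ s) (1:ℝ) hp hzA hwA'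
      simpa [vsub_eq_sub, vadd_eq_add, add_comm] using this
    · have : dist (w' + (p - z)) w' = dist p z := by
        simp [dist_eq_norm]
      rw [this]
      exact lt_of_lt_of_le hd (min_le_right _ _)
  have hcombo := hs hmem1 hmem2 (by linarith : (0:ℝ) ≤ 1 - τ) h0 (by ring)
  have : (1 - τ) • (w + (p - z)) + τ • (w' + (p - z)) = p := by
    rw [hz]; module
  rwa [this] at hcombo

lemma grad_ineq_aux {E : Type*} [NormedAddCommGroup E] [InnerProductSpace ℝ E]
    [CompleteSpace E] {s : Set E} (hconv : Convex ℝ s)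
    (d : E → ℝ) (g : E → E)
    (hdg : ∀ z ∈ intrinsicInterior ℝ s, HasGradientAt d (g z) z)
    (hmono : ∀ z ∈ intrinsicInterior ℝ s, ∀ z' ∈ intrinsicInterior ℝ s,
        ⟪g z - g z', z - z'⟫ ≥ ‖z - z'‖ ^ 2)
    {u u' : E} (hu : u ∈ intrinsicInterior ℝ s) (hu' : u' ∈ intrinsicInterior ℝ s) :
    d u - d u' ≥ ⟪g u', u - u'⟫ := by
  set L : ℝ → E := fun τ => u' + τ • (u - u') with hL
  have hmemL : ∀ τ : ℝ, 0 ≤ τ → τ ≤ 1 → L τ ∈ intrinsicInterior ℝ s := fun τ h0 h1 =>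
    combo_mem_intrinsicInterior' hconv hu' hu h0 h1
  have hLderiv : ∀ τ : ℝ, HasDerivAt L (u - u') τ := by
    intro τ
    have := ((hasDerivAt_id τ).smul_const (u - u')).const_add u'
    rw [one_smul] at this; exact this
  have hderiv : ∀ τ : ℝ, 0 ≤ τ → τ ≤ 1 →
      HasDerivAt (fun τ => d (L τ)) ⟪g (L τ), u - u'⟫ τ := by
    intro τ h0 h1
    have hg := (hdg (L τ) (hmemL τ h0 h1)).hasFDerivAt
    have := hg.comp_hasDerivAt τ (hLderiv τ)
    simp at this; exact this
  have hcont : ContinuousOn (fun τ => d (L τ)) (Set.Icc 0 1) := fun τ hτ =>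
    ((hderiv τ hτ.1 hτ.2).continuousAt).continuousWithinAt
  obtain ⟨c, hc, hceq⟩ := exists_hasDerivAt_eq_slope (fun τ => d (L τ))
      (fun τ => ⟪g (L τ), u - u'⟫) one_pos hcont
      (fun τ hτ => hderiv τ (le_of_lt hτ.1) (le_of_lt hτ.2))
  have hL1 : L 1 = u := by rw [hL]; simp
  have hL0 : L 0 = u' := by rw [hL]; simp
  rw [hL1, hL0] at hceq
  have hgc : ⟪g (L c) - g u', u - u'⟫ ≥ 0 := by
    have h := hmono (L c) (hmemL c (le_of_lt hc.1) (le_of_lt hc.2)) u' hu'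
    have hLc : L c - u' = c • (u - u') := by rw [hL]; simp
    rw [hLc, real_inner_smul_right] at h
    have hge0 : c * ⟪g (L c) - g u', u - u'⟫ ≥ 0 :=
      le_trans (by positivity) h
    nlinarith [hc.1]
  have : d u - d u' = ⟪g (L c), u - u'⟫ := by
    rw [hceq]; ring
  rw [this]
  have hexp : ⟪g (L c) - g u', u - u'⟫ = ⟪g (L c), u - u'⟫ - ⟪g u', u - u'⟫ :=
    inner_sub_left _ _ _
  linarith [hexp ▸ hgc]

set_option maxHeartbeats 1000000 in
lemma block_ineq_aux {E : Type*} [NormedAddCommGroup E] [InnerProductSpace ℝ E]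
    (αp t t' φ φ' : ℝ) (u u' gu gu' : E)
    (hα : 0 ≤ αp) (ht0 : 0 < t) (ht1 : t ≤ 1) (ht0' : 0 < t') (ht1' : t' ≤ 1)
    (hu1 : ‖u‖ ≤ 1) (hu1' : ‖u'‖ ≤ 1)
    (hmono : ⟪gu - gu', u - u'⟫ ≥ ‖u - u'‖ ^ 2)
    (hdn : φ - φ' ≥ -⟪gu - gu', u⟫)
    (hup : φ - φ' ≤ -⟪gu - gu', u'⟫) :
    αp * ⟪gu - gu', t • u - t' • u'⟫ + (αp * φ - αp * φ') * (t - t')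
      ≥ αp / 2 * ‖t • u - t' • u'‖ ^ 2 - αp * (t - t') ^ 2 := by
  have id1 : ⟪gu - gu', t • u - t' • u'⟫
      = t * ⟪gu - gu', u - u'⟫ + (t - t') * ⟪gu - gu', u'⟫ := by
    rw [show t • u - t' • u' = t • (u - u') + (t - t') • u' by module]
    rw [inner_add_right, real_inner_smul_right, real_inner_smul_right]
  have id2 : ⟪gu - gu', t • u - t' • u'⟫
      = t' * ⟪gu - gu', u - u'⟫ + (t - t') * ⟪gu - gu', u⟫ := by
    rw [show t • u - t' • u' = t' • (u - u') + (t - t') • u by module]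
    rw [inner_add_right, real_inner_smul_right, real_inner_smul_right]
  have nb1 : ‖t • u - t' • u'‖ ≤ t' * ‖u - u'‖ + |t - t'| * ‖u‖ := by
    rw [show t • u - t' • u' = t' • (u - u') + (t - t') • u by module]
    refine (norm_add_le _ _).trans ?_
    rw [norm_smul, norm_smul, Real.norm_eq_abs, Real.norm_eq_abs, abs_of_pos ht0']
  have nb2 : ‖t • u - t' • u'‖ ≤ t * ‖u - u'‖ + |t - t'| * ‖u'‖ := by
    rw [show t • u - t' • u' = t • (u - u') + (t - t') • u' by module]
    refine (norm_add_le _ _).trans ?_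
    rw [norm_smul, norm_smul, Real.norm_eq_abs, Real.norm_eq_abs, abs_of_pos ht0]
  -- pass to scalar variables
  set A : ℝ := ⟪gu - gu', t • u - t' • u'⟫ with hA
  set D : ℝ := ⟪gu - gu', u - u'⟫ with hD
  set I : ℝ := ⟪gu - gu', u⟫ with hI
  set I' : ℝ := ⟪gu - gu', u'⟫ with hI'
  set N : ℝ := ‖u - u'‖ with hNn
  set W : ℝ := ‖t • u - t' • u'‖ with hW
  set nu : ℝ := ‖u‖ with hnu
  set nu' : ℝ := ‖u'‖ with hnu'
  have hN0 : 0 ≤ N := norm_nonneg _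
  have hW0 : 0 ≤ W := norm_nonneg _
  have hnu0 : 0 ≤ nu := norm_nonneg _
  have hnu0' : 0 ≤ nu' := norm_nonneg _
  clear_value A D I I' N W nu nu'
  clear hA hD hI hI' hNn hW hnu hnu'
  set δ : ℝ := t - t' with hδ
  clear_value δ
  -- key inequality
  have key : A + (φ - φ') * δ ≥ min t t' * N ^ 2 := by
    rcases le_total t' t with h | h
    · have hδ0 : 0 ≤ δ := by rw [hδ]; linarith
      have h1 : (φ - φ') * δ ≥ (-I) * δ := mul_le_mul_of_nonneg_right hdn hδ0
      rw [min_eq_right h, id2]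
      nlinarith
    · have hδ0 : δ ≤ 0 := by rw [hδ]; linarith
      have h1 : (φ - φ') * δ ≥ (-I') * δ := mul_le_mul_of_nonpos_right hup hδ0
      rw [min_eq_left h, id1]
      nlinarith
  -- norm bound
  have nb : W ^ 2 ≤ 2 * min t t' * N ^ 2 + 2 * δ ^ 2 := by
    rcases le_total t' t with h | h
    · have h2 : W ^ 2 ≤ (t' * N + |δ| * nu) ^ 2 := by
        have := pow_le_pow_left₀ hW0 nb1 2
        exact this
      rw [min_eq_right h]
      have habs : |δ| ^ 2 = δ ^ 2 := sq_abs δ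
      have h3 : t' * N ^ 2 - t' ^ 2 * N ^ 2 ≥ 0 := by
        nlinarith [mul_nonneg (mul_nonneg ht0'.le (sub_nonneg.2 ht1')) (sq_nonneg N)]
      have h4 : δ ^ 2 - δ ^ 2 * nu ^ 2 ≥ 0 := by
        nlinarith [mul_nonneg (sq_nonneg δ)
          (mul_nonneg (sub_nonneg.2 hu1) (by linarith : (0:ℝ) ≤ 1 + nu))]
      nlinarith [sq_nonneg (t' * N - |δ| * nu)]
    · have h2 : W ^ 2 ≤ (t * N + |δ| * nu') ^ 2 := by
        have := pow_le_pow_left₀ hW0 nb2 2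
        exact this
      rw [min_eq_left h]
      have habs : |δ| ^ 2 = δ ^ 2 := sq_abs δ
      have h3 : t * N ^ 2 - t ^ 2 * N ^ 2 ≥ 0 := by
        nlinarith [mul_nonneg (mul_nonneg ht0.le (sub_nonneg.2 ht1)) (sq_nonneg N)]
      have h4 : δ ^ 2 - δ ^ 2 * nu' ^ 2 ≥ 0 := by
        nlinarith [mul_nonneg (sq_nonneg δ)
          (mul_nonneg (sub_nonneg.2 hu1') (by linarith : (0:ℝ) ≤ 1 + nu'))]
      nlinarith [sq_nonneg (t * N - |δ| * nu')]
  have hmin0 : 0 ≤ min t t' := le_min (le_of_lt ht0) (le_of_lt ht0')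
  have key' : αp * (A + (φ - φ') * δ) ≥ αp * (min t t' * N ^ 2) :=
    mul_le_mul_of_nonneg_left key hα
  have nb' : αp / 2 * W ^ 2 ≤ αp / 2 * (2 * min t t' * N ^ 2 + 2 * δ ^ 2) :=
    mul_le_mul_of_nonneg_left nb (by linarith)
  have e1 : αp * A + (αp * φ - αp * φ') * δ = αp * (A + (φ - φ') * δ) := by ring
  rw [e1]
  have e2 : αp / 2 * (2 * min t t' * N ^ 2 + 2 * δ ^ 2) = αp * (min t t' * N ^ 2) + αp * δ ^ 2 := by
    ring
  rw [e2] at nb'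
  linarith

set_option maxHeartbeats 1600000 in
/-- **Weights achieving 1-strong convexity of composite dilated DGFs** (Corollary 1).
Under the chain-of-scaled-extensions setup, with the coefficients chosen recursively as
`α_n = 2`, `α_k = 2 + 2·‖∑_{p>k} α_p·‖a_p‖₀·a_{p,k}‖_∞`, the composite DGF `d` (with
gradient `G`) satisfies `⟨∇d(x) − ∇d(x'), x − x'⟩ ≥ ‖x − x'‖₂²` on
`(relint X_1) ◁^{h_1} ⋯ ◁^{h_{n−1}} (relint X_n)`, i.e., it is 1-strongly convex with
respect to the Euclidean norm. -/
theorem chain_composite_dgf_one_strong_convexity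
    {n : ℕ} (hn : 0 < n)
    (s : Fin n → ℕ) (hs : ∀ k, 0 < s k)
    (X : (k : Fin n) → Set (EuclideanSpace ℝ (Fin (s k))))
    (hXne : ∀ k, (X k).Nonempty) (hXcpt : ∀ k, IsCompact (X k))
    (hXconv : ∀ k, Convex ℝ (X k)) (hXbd : ∀ k, ∀ v ∈ X k, ‖v‖ ≤ 1)
    (a : (k : Fin n) → (q : Fin n) → EuclideanSpace ℝ (Fin (s q)))
    (ha : ∀ k q, q < k → ∀ i, a k q i ∈ Set.Icc (0 : ℝ) 1)
    (H : Fin n → ((k : Fin n) → EuclideanSpace ℝ (Fin (s k))) → ℝ)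
    (hHdef : ∀ k x, H k x = ∑ q ∈ Finset.univ.filter (fun q => q < k), ⟪a k q, x q⟫)
    (memX memRelX : ((k : Fin n) → EuclideanSpace ℝ (Fin (s k))) → Prop)
    (hmemX : ∀ x, memX x ↔ ∀ k : Fin n,
        (k.val = 0 → x k ∈ X k) ∧ (k.val ≠ 0 → ∃ v ∈ X k, x k = H k x • v))
    (hmemRelX : ∀ x, memRelX x ↔ ∀ k : Fin n,
        (k.val = 0 → x k ∈ intrinsicInterior ℝ (X k)) ∧
        (k.val ≠ 0 → ∃ v ∈ intrinsicInterior ℝ (X k), x k = H k x • v))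
    (hH01 : ∀ x, memX x → ∀ k : Fin n, k.val ≠ 0 → 0 ≤ H k x ∧ H k x ≤ 1)
    (hHpos : ∀ x, memRelX x → ∀ k : Fin n, k.val ≠ 0 → 0 < H k x)
    (d : (k : Fin n) → EuclideanSpace ℝ (Fin (s k)) → ℝ)
    (g : (k : Fin n) → EuclideanSpace ℝ (Fin (s k)) → EuclideanSpace ℝ (Fin (s k)))
    (hdc : ∀ k, ContinuousOn (d k) (X k))
    (hdg : ∀ k, ∀ y ∈ intrinsicInterior ℝ (X k), HasGradientAt (d k) (g k y) y)
    (hmono : ∀ k, ∀ y ∈ intrinsicInterior ℝ (X k), ∀ y' ∈ intrinsicInterior ℝ (X k),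
        ⟪g k y - g k y', y - y'⟫ ≥ ‖y - y'‖ ^ 2)
    (α : Fin n → ℝ)
    (hαrec : ∀ k : Fin n, α k = 2 + 2 *
        (Finset.univ.sup' (Finset.univ_nonempty_iff.mpr (Fin.pos_iff_nonempty.mp (hs k)))
          (fun i : Fin (s k) =>
            |∑ p ∈ Finset.univ.filter (fun p => k < p),
              α p * ((∑ q ∈ Finset.univ.filter (fun q => q < p),
                  (Finset.univ.filter (fun i : Fin (s q) => a p q i ≠ 0)).card : ℕ) : ℝ)
                * a p k i|)))
    (y : ((k : Fin n) → EuclideanSpace ℝ (Fin (s k))) → (k : Fin n) → EuclideanSpace ℝ (Fin (s k)))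
    (hy : ∀ x k, y x k = if k.val = 0 then x k else (H k x)⁻¹ • x k)
    (G : ((k : Fin n) → EuclideanSpace ℝ (Fin (s k))) → (k : Fin n) → EuclideanSpace ℝ (Fin (s k)))
    (hG : ∀ x k, G x k = α k • g k (y x k)
        + ∑ p ∈ Finset.univ.filter (fun p => k < p),
            (α p * (d p (y x p) - ⟪g p (y x p), y x p⟫)) • a p k) :
    ∀ x x', memRelX x → memRelX x' →
      ∑ k, ⟪G x k - G x' k, x k - x' k⟫ ≥ ∑ k, ∑ i, (x k i - x' k i) ^ 2 := by
  classical
  intro x x' hx hx'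
  -- H vanishes at the zero index
  have hH0 : ∀ (z : (k : Fin n) → EuclideanSpace ℝ (Fin (s k))) (k : Fin n),
      k.val = 0 → H k z = 0 := by
    intro z k hk
    rw [hHdef, Finset.filter_false_of_mem, Finset.sum_empty]
    intro q _
    simp [Fin.lt_def, hk]
  -- memRelX implies memX
  have hmemXof : ∀ z, memRelX z → memX z := by
    intro z hz
    rw [hmemRelX] at hz
    rw [hmemX]
    intro k
    refine ⟨fun h0 => intrinsicInterior_subset ((hz k).1 h0), fun h0 => ?_⟩
    obtain ⟨v, hv, hveq⟩ := (hz k).2 h0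
    exact ⟨v, intrinsicInterior_subset hv, hveq⟩
  have hxX := hmemXof x hx
  have hx'X := hmemXof x' hx'
  -- scales
  set t : Fin n → ℝ := fun k => if k.val = 0 then 1 else H k x with htdef
  set t' : Fin n → ℝ := fun k => if k.val = 0 then 1 else H k x' with ht'def
  have hfactsgen : ∀ (z : (k : Fin n) → EuclideanSpace ℝ (Fin (s k))), memRelX z →
      ∀ k : Fin n, 0 < (if k.val = 0 then 1 else H k z) ∧ (if k.val = 0 then 1 else H k z) ≤ 1 ∧
        z k = (if k.val = 0 then 1 else H k z) • y z k ∧ y z k ∈ intrinsicInterior ℝ (X k) := by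
    intro z hz k
    by_cases h0 : k.val = 0
    · have hzk := ((hmemRelX z).mp hz k).1 h0
      refine ⟨by simp [h0], by simp [h0], by simp [h0, hy z k], ?_⟩
      rw [hy z k]
      simpa [h0] using hzk
    · obtain ⟨v, hv, hveq⟩ := ((hmemRelX z).mp hz k).2 h0
      have hHp := hHpos z hz k h0
      have hH1 := (hH01 z (hmemXof z hz) k h0).2
      have hyv : y z k = v := by
        rw [hy z k]
        simp only [h0, if_false]
        rw [hveq, smul_smul, inv_mul_cancel₀ (ne_of_gt hHp), one_smul]
      refine ⟨by simpa [h0] using hHp, by simpa [h0] using hH1, ?_, by rw [hyv]; exact hv⟩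
      rw [hyv]
      simpa [h0] using hveq
  have hfacts : ∀ k : Fin n, 0 < t k ∧ t k ≤ 1 ∧ x k = t k • y x k ∧
      y x k ∈ intrinsicInterior ℝ (X k) := fun k => hfactsgen x hx k
  have hfacts' : ∀ k : Fin n, 0 < t' k ∧ t' k ≤ 1 ∧ x' k = t' k • y x' k ∧
      y x' k ∈ intrinsicInterior ℝ (X k) := fun k => hfactsgen x' hx' k
  have hδeq : ∀ k : Fin n, t k - t' k = H k x - H k x' := by
    intro k
    by_cases h0 : k.val = 0
    · simp [htdef, ht'def, h0, hH0 x k h0, hH0 x' k h0]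
    · simp [htdef, ht'def, h0]
  -- the weight structure
  set Np : Fin n → ℝ := fun p => ((∑ q ∈ Finset.univ.filter (fun q => q < p),
      (Finset.univ.filter (fun i : Fin (s q) => a p q i ≠ 0)).card : ℕ) : ℝ) with hNpdef
  set C : (k : Fin n) → Fin (s k) → ℝ := fun k i =>
      ∑ p ∈ Finset.univ.filter (fun p => k < p), α p * Np p * a p k i with hCdef
  set M : Fin n → ℝ := fun k =>
      Finset.univ.sup' (Finset.univ_nonempty_iff.mpr (Fin.pos_iff_nonempty.mp (hs k)))
        (fun i => |C k i|) with hMdef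
  have hαM : ∀ k, α k = 2 + 2 * M k := fun k => hαrec k
  have hM0 : ∀ k, 0 ≤ M k := by
    intro k
    have := Finset.le_sup' (fun i => |C k i|) (Finset.mem_univ (⟨0, hs k⟩ : Fin (s k)))
    exact le_trans (abs_nonneg _) this
  have hCle : ∀ k i, C k i ≤ M k := fun k i =>
    le_trans (le_abs_self _) (Finset.le_sup' (fun i => |C k i|) (Finset.mem_univ i))
  have hα0 : ∀ k, 0 ≤ α k := by
    intro k
    have := hM0 k
    rw [hαM k]
    linarith
  -- phi values
  set φ : Fin n → ℝ := fun p => d p (y x p) - ⟪g p (y x p), y x p⟫ with hφdef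
  set φ' : Fin n → ℝ := fun p => d p (y x' p) - ⟪g p (y x' p), y x' p⟫ with hφ'def
  -- expansion of each coordinate of the lhs
  have expand : ∀ k : Fin n, ⟪G x k - G x' k, x k - x' k⟫ =
      α k * ⟪g k (y x k) - g k (y x' k), x k - x' k⟫
      + ∑ p ∈ Finset.univ.filter (fun p => k < p),
          (α p * φ p - α p * φ' p) * ⟪a p k, x k - x' k⟫ := by
    intro k
    have e : G x k - G x' k = α k • (g k (y x k) - g k (y x' k))
        + ∑ p ∈ Finset.univ.filter (fun p => k < p), (α p * φ p - α p * φ' p) • a p k := by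
      rw [hG x k, hG x' k, add_sub_add_comm, ← smul_sub, ← Finset.sum_sub_distrib]
      congr 1
      refine Finset.sum_congr rfl fun p _ => ?_
      rw [← sub_smul]
    rw [e, inner_add_left, real_inner_smul_left, sum_inner]
    congr 1
    exact Finset.sum_congr rfl fun p _ => real_inner_smul_left _ _ _
  -- swapping double sums
  have hswap : ∀ (F : Fin n → Fin n → ℝ),
      ∑ k, ∑ p ∈ Finset.univ.filter (fun p => k < p), F k p
      = ∑ p, ∑ k ∈ Finset.univ.filter (fun k => k < p), F k p := by
    intro F
    simp_rw [Finset.sum_filter]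
    exact Finset.sum_comm
  have hHdiff : ∀ p : Fin n, ∑ k ∈ Finset.univ.filter (fun k => k < p),
      ⟪a p k, x k - x' k⟫ = t p - t' p := by
    intro p
    rw [hδeq p, hHdef, hHdef, ← Finset.sum_sub_distrib]
    exact Finset.sum_congr rfl fun q _ => inner_sub_right _ _ _
  have step1 : ∑ k, ⟪G x k - G x' k, x k - x' k⟫
      = ∑ k, (α k * ⟪g k (y x k) - g k (y x' k), x k - x' k⟫
          + (α k * φ k - α k * φ' k) * (t k - t' k)) := by
    calc ∑ k, ⟪G x k - G x' k, x k - x' k⟫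
        = ∑ k, α k * ⟪g k (y x k) - g k (y x' k), x k - x' k⟫
          + ∑ k, ∑ p ∈ Finset.univ.filter (fun p => k < p),
              (α p * φ p - α p * φ' p) * ⟪a p k, x k - x' k⟫ := by
          simp_rw [expand]
          rw [Finset.sum_add_distrib]
      _ = ∑ k, α k * ⟪g k (y x k) - g k (y x' k), x k - x' k⟫
          + ∑ p, (α p * φ p - α p * φ' p) * (t p - t' p) := by
          congr 1
          rw [hswap]
          refine Finset.sum_congr rfl fun p _ => ?_
          rw [← Finset.mul_sum, hHdiff p]
      _ = _ := by rw [Finset.sum_add_distrib]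
  -- the per-block inequality
  have hblock : ∀ k : Fin n, α k * ⟪g k (y x k) - g k (y x' k), x k - x' k⟫
      + (α k * φ k - α k * φ' k) * (t k - t' k)
      ≥ α k / 2 * ‖x k - x' k‖ ^ 2 - α k * (t k - t' k) ^ 2 := by
    intro k
    obtain ⟨ht0, ht1, hxe, hyi⟩ := hfacts k
    obtain ⟨ht0', ht1', hxe', hyi'⟩ := hfacts' k
    have hu1 : ‖y x k‖ ≤ 1 := hXbd k _ (intrinsicInterior_subset hyi)
    have hu1' : ‖y x' k‖ ≤ 1 := hXbd k _ (intrinsicInterior_subset hyi')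
    have h1 := grad_ineq_aux (hXconv k) (d k) (g k) (hdg k) (hmono k) hyi hyi'
    have h1' := grad_ineq_aux (hXconv k) (d k) (g k) (hdg k) (hmono k) hyi' hyi
    have e1 : ⟪g k (y x k) - g k (y x' k), y x k⟫
        = ⟪g k (y x k), y x k⟫ - ⟪g k (y x' k), y x k⟫ := inner_sub_left _ _ _
    have e1' : ⟪g k (y x k) - g k (y x' k), y x' k⟫
        = ⟪g k (y x k), y x' k⟫ - ⟪g k (y x' k), y x' k⟫ := inner_sub_left _ _ _
    have e2 : ⟪g k (y x' k), y x k - y x' k⟫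
        = ⟪g k (y x' k), y x k⟫ - ⟪g k (y x' k), y x' k⟫ := inner_sub_right _ _ _
    have e2' : ⟪g k (y x k), y x' k - y x k⟫
        = ⟪g k (y x k), y x' k⟫ - ⟪g k (y x k), y x k⟫ := inner_sub_right _ _ _
    have hdn : φ k - φ' k ≥ -⟪g k (y x k) - g k (y x' k), y x k⟫ := by
      rw [hφdef, hφ'def, e1]
      rw [e2] at h1
      simp only
      linarith
    have hup : φ k - φ' k ≤ -⟪g k (y x k) - g k (y x' k), y x' k⟫ := by
      rw [hφdef, hφ'def, e1']
      rw [e2'] at h1'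
      simp only
      linarith
    have hb := block_ineq_aux (α k) (t k) (t' k) (φ k) (φ' k) (y x k) (y x' k)
        (g k (y x k)) (g k (y x' k)) (hα0 k) ht0 ht1 ht0' ht1' hu1 hu1'
        (hmono k _ hyi _ hyi') hdn hup
    rw [← hxe, ← hxe'] at hb
    exact hb
  -- squared norms coordinatewise
  have hSq : ∀ k : Fin n, ‖x k - x' k‖ ^ 2 = ∑ i, (x k i - x' k i) ^ 2 := by
    intro k
    rw [← real_inner_self_eq_norm_sq, PiLp.inner_apply]
    refine Finset.sum_congr rfl fun i _ => ?_
    simp [RCLike.inner_apply, sq]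
  -- counting bound on the scale differences
  have hNp0 : ∀ p, 0 ≤ Np p := fun p => Nat.cast_nonneg _
  have hδsq : ∀ p : Fin n, (t p - t' p) ^ 2 ≤ Np p *
      ∑ q ∈ Finset.univ.filter (fun q => q < p), ∑ i, a p q i * (x q i - x' q i) ^ 2 := by
    intro p
    set T := (Finset.univ.filter (fun q : Fin n => q < p)).sigma
        (fun q => Finset.univ.filter (fun i : Fin (s q) => a p q i ≠ 0)) with hT
    have hδexp : t p - t' p = ∑ z ∈ T, a p z.1 z.2 * (x z.1 z.2 - x' z.1 z.2) := by
      rw [← hHdiff p, hT, Finset.sum_sigma]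
      refine Finset.sum_congr rfl fun q hq => ?_
      rw [Finset.sum_filter_of_ne]
      · rw [PiLp.inner_apply]
        refine Finset.sum_congr rfl fun i _ => ?_
        simp [RCLike.inner_apply]
        ring
      · intro i _ hne h0
        exact hne (by rw [h0, zero_mul])
    have hCS := sq_sum_le_card_mul_sum_sq
      (s := T) (f := fun z => a p z.1 z.2 * (x z.1 z.2 - x' z.1 z.2))
    have hcard : (T.card : ℝ) = Np p := by
      rw [hT, Finset.card_sigma, hNpdef]
    have hle : ∑ z ∈ T, (a p z.1 z.2 * (x z.1 z.2 - x' z.1 z.2)) ^ 2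
        ≤ ∑ q ∈ Finset.univ.filter (fun q => q < p), ∑ i, a p q i * (x q i - x' q i) ^ 2 := by
      rw [hT, Finset.sum_sigma]
      refine Finset.sum_le_sum fun q hq => ?_
      have hq' : q < p := (Finset.mem_filter.mp hq).2
      calc ∑ i ∈ Finset.univ.filter (fun i : Fin (s q) => a p q i ≠ 0),
            (a p q i * (x q i - x' q i)) ^ 2
          ≤ ∑ i ∈ Finset.univ.filter (fun i : Fin (s q) => a p q i ≠ 0),
            a p q i * (x q i - x' q i) ^ 2 := by
            refine Finset.sum_le_sum fun i _ => ?_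
            obtain ⟨ha0, ha1⟩ := ha p q hq' i
            rw [mul_pow]
            nlinarith [sq_nonneg (x q i - x' q i),
              mul_nonneg (mul_nonneg ha0 (sub_nonneg.2 ha1)) (sq_nonneg (x q i - x' q i))]
        _ ≤ ∑ i, a p q i * (x q i - x' q i) ^ 2 :=
            Finset.sum_le_sum_of_subset_of_nonneg (Finset.filter_subset _ _)
              (fun i _ _ => mul_nonneg (ha p q hq' i).1 (sq_nonneg _))
    calc (t p - t' p) ^ 2
        = (∑ z ∈ T, a p z.1 z.2 * (x z.1 z.2 - x' z.1 z.2)) ^ 2 := by rw [hδexp]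
      _ ≤ (T.card : ℝ) * ∑ z ∈ T, (a p z.1 z.2 * (x z.1 z.2 - x' z.1 z.2)) ^ 2 := hCS
      _ ≤ Np p * ∑ q ∈ Finset.univ.filter (fun q => q < p),
            ∑ i, a p q i * (x q i - x' q i) ^ 2 := by
          rw [hcard]
          exact mul_le_mul_of_nonneg_left hle (hNp0 p)
  -- total bound on scale differences
  have hsum2 : ∑ p, α p * (t p - t' p) ^ 2 ≤ ∑ q, M q * ∑ i, (x q i - x' q i) ^ 2 := by
    calc ∑ p, α p * (t p - t' p) ^ 2
        ≤ ∑ p, α p * (Np p * ∑ q ∈ Finset.univ.filter (fun q => q < p),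
            ∑ i, a p q i * (x q i - x' q i) ^ 2) :=
          Finset.sum_le_sum fun p _ => mul_le_mul_of_nonneg_left (hδsq p) (hα0 p)
      _ = ∑ p, ∑ q ∈ Finset.univ.filter (fun q => q < p),
            ∑ i, α p * Np p * a p q i * (x q i - x' q i) ^ 2 := by
          refine Finset.sum_congr rfl fun p _ => ?_
          rw [Finset.mul_sum, Finset.mul_sum]
          refine Finset.sum_congr rfl fun q _ => ?_
          rw [Finset.mul_sum, Finset.mul_sum]
          refine Finset.sum_congr rfl fun i _ => by ring
      _ = ∑ q, ∑ p ∈ Finset.univ.filter (fun p => q < p),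
            ∑ i, α p * Np p * a p q i * (x q i - x' q i) ^ 2 := by
          have := hswap (fun q p => ∑ i, α p * Np p * a p q i * (x q i - x' q i) ^ 2)
          exact this.symm
      _ = ∑ q, ∑ i, C q i * (x q i - x' q i) ^ 2 := by
          refine Finset.sum_congr rfl fun q _ => ?_
          rw [Finset.sum_comm]
          refine Finset.sum_congr rfl fun i _ => ?_
          rw [hCdef]
          simp only
          rw [Finset.sum_mul]
      _ ≤ ∑ q, ∑ i, M q * (x q i - x' q i) ^ 2 :=
          Finset.sum_le_sum fun q _ => Finset.sum_le_sum fun i _ =>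
            mul_le_mul_of_nonneg_right (hCle q i) (sq_nonneg _)
      _ = ∑ q, M q * ∑ i, (x q i - x' q i) ^ 2 :=
          Finset.sum_congr rfl fun q _ => (Finset.mul_sum _ _ _).symm
  -- put everything together
  rw [step1]
  have hlow : ∑ k, (α k * ⟪g k (y x k) - g k (y x' k), x k - x' k⟫
      + (α k * φ k - α k * φ' k) * (t k - t' k))
      ≥ ∑ k, (α k / 2 * ‖x k - x' k‖ ^ 2 - α k * (t k - t' k) ^ 2) :=
    Finset.sum_le_sum fun k _ => hblock k
  have hmid : ∑ k, (α k / 2 * ‖x k - x' k‖ ^ 2 - α k * (t k - t' k) ^ 2)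
      = ∑ k, (1 + M k) * (∑ i, (x k i - x' k i) ^ 2) - ∑ k, α k * (t k - t' k) ^ 2 := by
    rw [Finset.sum_sub_distrib]
    congr 1
    refine Finset.sum_congr rfl fun k _ => ?_
    rw [hSq k, hαM k]
    ring
  have hSq0 : ∀ k : Fin n, (0:ℝ) ≤ ∑ i, (x k i - x' k i) ^ 2 :=
    fun k => Finset.sum_nonneg fun i _ => sq_nonneg _
  have hfin : ∑ k, (1 + M k) * (∑ i, (x k i - x' k i) ^ 2)
      = ∑ k, (∑ i, (x k i - x' k i) ^ 2) + ∑ k, M k * (∑ i, (x k i - x' k i) ^ 2) := by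
    rw [← Finset.sum_add_distrib]
    refine Finset.sum_congr rfl fun k _ => by ring
  linarith [hlow, hsum2]
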